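/- For every ε > 0 there exists N such that for every integer n ≥ N there is a standard set A ⊆ ℤ₂ⁿ (the group (ℤ/2ℤ)ⁿ) with λ(A) < ε and λ±(A) > 1/2 − ε. -/

import Mathlib

open scoped Pointwise ComplexOrder

noncomputable section

def IsStandard {G : Type*} [AddCommGroup G] (A : Set G) : Prop :=
  A = -A ∧ (0 : G) ∈ A

def Delta {G : Type*} [AddCommGroup G] (A : Set G) : ℕ :=
  sSup {n | ∃ B : Finset G, ((B : Set G) - (B : Set G)) ∩ A = {0} ∧ B.card = n}

def DeltaBar {G : Type*} [AddCommGroup G] (A : Set G) : ℕ :=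
  sSup {n | ∃ B : Finset G, ((B : Set G) - (B : Set G)) ⊆ A ∧ B.card = n}

def deltaL {G : Type*} [AddCommGroup G] [Fintype G] (A : Set G) : ℝ :=
  (Delta A : ℝ) / (Fintype.card G : ℝ)

def deltaU {G : Type*} [AddCommGroup G] (A : Set G) : ℝ :=
  1 / (DeltaBar A : ℝ)

def ftrans {G : Type*} [AddCommGroup G] [Fintype G] (f : G → ℝ) (γ : AddChar G Circle) : ℂ :=
  ∑ x, (γ x : ℂ) * (f x : ℂ)

def PosFT {G : Type*} [AddCommGroup G] [Fintype G] (f : G → ℝ) : Prop :=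
  ∀ γ : AddChar G Circle, 0 ≤ ftrans f γ

def lamSet {G : Type*} [AddCommGroup G] [Fintype G] (S : Set (G → ℝ)) : Set ℝ :=
  {r | ∃ f ∈ S, PosFT f ∧ (∑ x, f x) ≠ 0 ∧ r = f 0 / ∑ x, f x}

def lam {G : Type*} [AddCommGroup G] [Fintype G] (A : Set G) : ℝ :=
  sInf (lamSet {f | f ≠ 0 ∧ ∀ x ∉ A, f x = 0})

def lamMinus {G : Type*} [AddCommGroup G] [Fintype G] (A : Set G) : ℝ :=
  sInf (lamSet {f | f ≠ 0 ∧ ∀ x ∉ A, f x ≤ 0})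

def lamPlus {G : Type*} [AddCommGroup G] [Fintype G] (A : Set G) : ℝ :=
  sInf (lamSet {f | f ≠ 0 ∧ (∀ x ∉ A, f x = 0) ∧ ∀ x ∈ A, 0 ≤ f x})

def lamPM {G : Type*} [AddCommGroup G] [Fintype G] (A : Set G) : ℝ :=
  sInf (lamSet {f | f ≠ 0 ∧ (∀ x ∉ A, f x ≤ 0) ∧ ∀ x ∈ A, 0 ≤ f x})


namespace Stmt4Aux

lemma add_self_zero {n : ℕ} (x : Fin n → ZMod 2) : x + x = 0 := by
  ext j
  have : ∀ c : ZMod 2, c + c = 0 := by decide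
  exact this (x j)
variable {n : ℕ}

def sg : ZMod 2 → ℝ := fun t => if t = 0 then 1 else -1

lemma sg_zero : sg 0 = 1 := rfl
lemma sg_cases (t : ZMod 2) : sg t = 1 ∨ sg t = -1 := by
  unfold sg; split <;> simp
lemma sg_one_ne : (1 : ZMod 2) ≠ 0 := by decide
lemma sg_add (a b : ZMod 2) : sg (a + b) = sg a * sg b := by
  have h : ∀ c : ZMod 2, c = 0 ∨ c = 1 := by decide
  have h11 : (1 : ZMod 2) + 1 = 0 := by decide
  rcases h a with ha | ha <;> rcases h b with hb | hb <;> subst ha <;> subst hb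
  · simp [sg]
  · simp [sg]
  · simp [sg]
  · rw [h11]; simp [sg, sg_one_ne]
lemma sg_one : sg 1 = -1 := rfl
lemma sg_ne_zero (a : ZMod 2) (h : a ≠ 0) : sg a = -1 := by
  have h2 : a = 1 := by revert h; revert a; decide
  subst h2; rfl

def ee (x y : Fin n → ZMod 2) : ℝ := sg (∑ i, x i * y i)

lemma ee_comm (x y : Fin n → ZMod 2) : ee x y = ee y x := by
  unfold ee; congr 1; exact Finset.sum_congr rfl fun i _ => mul_comm _ _
lemma ee_add_left (x x' y : Fin n → ZMod 2) : ee (x + x') y = ee x y * ee x' y := by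
  unfold ee
  rw [← sg_add]; congr 1
  rw [← Finset.sum_add_distrib]
  exact Finset.sum_congr rfl fun i _ => by simp [add_mul]
lemma ee_zero_left (y : Fin n → ZMod 2) : ee 0 y = 1 := by
  simp [ee, sg_zero]
lemma ee_zero_right (x : Fin n → ZMod 2) : ee x 0 = 1 := by
  simp [ee, sg_zero]
lemma ee_sq (x y : Fin n → ZMod 2) : ee x y * ee x y = 1 := by
  rcases sg_cases (∑ i, x i * y i) with h | h <;> simp [ee, h]
lemma ee_abs_le (x y : Fin n → ZMod 2) : |ee x y| ≤ 1 := by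
  rcases sg_cases (∑ i, x i * y i) with h | h <;> simp [ee, h]

def dl (i : Fin n) : Fin n → ZMod 2 := fun j => if j = i then 1 else 0

lemma ee_dl (i : Fin n) (y : Fin n → ZMod 2) : ee (dl i) y = sg (y i) := by
  unfold ee dl
  congr 1
  rw [Finset.sum_eq_single i]
  · simp
  · intro b _ hb; simp [hb]
  · simp

def wt (x : Fin n → ZMod 2) : ℕ := (Finset.univ.filter fun i => x i ≠ 0).card

lemma wt_le (x : Fin n → ZMod 2) : wt x ≤ n := by
  simpa [wt] using (Finset.card_filter_le Finset.univ fun i => x i ≠ 0)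
lemma wt_pos (x : Fin n → ZMod 2) (hx : x ≠ 0) : 1 ≤ wt x := by
  obtain ⟨i, hi⟩ := Function.ne_iff.mp hx
  have hi' : x i ≠ 0 := by simpa using hi
  have : i ∈ Finset.univ.filter fun i => x i ≠ 0 := by simp [hi']
  exact Finset.card_pos.mpr ⟨i, this⟩
lemma wt_zero_iff (x : Fin n → ZMod 2) (h : wt x = 0) : x = 0 := by
  by_contra hx; exact absurd h (by have := wt_pos x hx; omega)

def uu : Fin n → ZMod 2 := fun _ => 1

lemma wt_uu : wt (uu : Fin n → ZMod 2) = n := by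
  unfold wt uu
  rw [Finset.filter_true_of_mem (fun i _ => by norm_num)]
  simp
lemma wt_uu_add (x : Fin n → ZMod 2) : wt ((uu : Fin n → ZMod 2) + x) = n - wt x := by
  have key : (Finset.univ.filter fun i => ((uu : Fin n → ZMod 2) + x) i ≠ 0) =
      (Finset.univ.filter fun i => ¬ (x i ≠ 0)) := by
    apply Finset.filter_congr
    intro i _
    have h : ∀ c : ZMod 2, ((1 + c ≠ 0) ↔ ¬ (c ≠ 0)) := by decide
    simpa [uu, Pi.add_apply] using h (x i)
  unfold wt
  rw [key, Finset.filter_not, Finset.card_sdiff_of_subset (Finset.filter_subset _ _)]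
  simp
lemma wt_dl_add (i : Fin n) (z : Fin n → ZMod 2) : wt z - 1 ≤ wt (dl i + z) := by
  have hsub : (Finset.univ.filter fun j => z j ≠ 0).erase i ⊆
      (Finset.univ.filter fun j => (dl i + z) j ≠ 0) := by
    intro j hj
    rw [Finset.mem_erase] at hj
    obtain ⟨hji, hj⟩ := hj
    simp only [Finset.mem_filter, Finset.mem_univ, true_and] at hj ⊢
    simpa [dl, Pi.add_apply, hji] using hj
  calc wt z - 1 ≤ ((Finset.univ.filter fun j => z j ≠ 0).erase i).card := by
        rw [Finset.card_erase_eq_ite]; unfold wt; split <;> omega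
    _ ≤ _ := Finset.card_le_card hsub

def ss (y : Fin n → ZMod 2) : ℝ := ∑ i, sg (y i)

lemma ss_eq_sum_ee (y : Fin n → ZMod 2) : ss y = ∑ i, ee (dl i) y := by
  unfold ss; exact Finset.sum_congr rfl fun i _ => (ee_dl i y).symm
lemma ss_eq (y : Fin n → ZMod 2) : ss y = n - 2 * (wt y : ℝ) := by
  unfold ss
  have : ∀ i, sg (y i) = 1 - 2 * (if y i ≠ 0 then (1:ℝ) else 0) := by
    intro i
    by_cases h : y i = 0 <;> norm_num [h, sg, sg_ne_zero]
  rw [Finset.sum_congr rfl fun i _ => this i]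
  rw [Finset.sum_sub_distrib]
  simp [Finset.sum_ite, wt, mul_comm]
lemma ss_zero : ss (0 : Fin n → ZMod 2) = n := by simp [ss, sg_zero]

lemma sum_ee_zero (z : Fin n → ZMod 2) (hz : z ≠ 0) : ∑ y, ee z y = 0 := by
  obtain ⟨i, hi⟩ := Function.ne_iff.mp hz
  have hi' : z i ≠ 0 := by simpa using hi
  have key : ∑ y, ee z (dl i + y) = ∑ y, ee z y :=
    Fintype.sum_equiv (Equiv.addLeft (dl i)) _ _ (fun y => rfl)
  have expand : ∀ y : Fin n → ZMod 2, ee z (dl i + y) = -(ee z y) := by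
    intro y
    rw [ee_comm, ee_add_left, ee_dl, sg_ne_zero _ hi', ee_comm y z]
    ring
  rw [Finset.sum_congr rfl fun y _ => expand y, Finset.sum_neg_distrib] at key
  linarith [key]
lemma sum_ee_zero' (z : Fin n → ZMod 2) (hz : z ≠ 0) : ∑ y, ee y z = 0 := by
  rw [Finset.sum_congr rfl fun y _ => ee_comm y z]
  exact sum_ee_zero z hz

lemma key_support (j : ℕ) : ∀ z : Fin n → ZMod 2, j < wt z →
    ∑ y, (ss y) ^ j * ee z y = 0 := by
  induction j with
  | zero =>
    intro z hz
    have hz0 : z ≠ 0 := by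
      intro h
      rw [h] at hz
      simp [wt] at hz
    simpa using sum_ee_zero z hz0
  | succ j ih =>
    intro z hz
    have step : ∀ y : Fin n → ZMod 2,
        (ss y) ^ (j+1) * ee z y = ∑ i, (ss y) ^ j * ee (dl i + z) y := by
      intro y
      rw [pow_succ, ss_eq_sum_ee (n := n) y]
      rw [mul_assoc, Finset.sum_mul, Finset.mul_sum]
      refine Finset.sum_congr rfl fun i _ => ?_
      rw [ee_add_left]
      try ring
    rw [Finset.sum_congr rfl fun y _ => step y, Finset.sum_comm]
    refine Finset.sum_eq_zero fun i _ => ih (dl i + z) ?_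
    have := wt_dl_add i z
    omega

noncomputable def mOne : Circle := ⟨-1, by norm_num [Submonoid.unitSphere, Metric.mem_sphere]⟩

lemma mOne_mul_mOne : mOne * mOne = 1 := by ext; rw [Circle.coe_mul]; simp [mOne]

noncomputable def chi (y : Fin n → ZMod 2) : AddChar (Fin n → ZMod 2) Circle where
  toFun x := if (∑ i, x i * y i) = 0 then 1 else mOne
  map_zero_eq_one' := by simp
  map_add_eq_mul' a b := by
    have hsum : (∑ i, (a + b) i * y i) = (∑ i, a i * y i) + (∑ i, b i * y i) := by
      rw [← Finset.sum_add_distrib]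
      exact Finset.sum_congr rfl fun i _ => by simp [add_mul]
    simp only [hsum]
    have h : ∀ c : ZMod 2, c = 0 ∨ c = 1 := by decide
    have h11 : (1 : ZMod 2) + 1 = 0 := by decide
    have h10 : (1 : ZMod 2) ≠ 0 := by decide
    rcases h (∑ i, a i * y i) with h1 | h1 <;> rcases h (∑ i, b i * y i) with h2 | h2 <;>
      rw [h1, h2]
    · simp
    · simp [h10]
    · simp [h10]
    · rw [h11]
      simp [h10, mOne_mul_mOne]

lemma chi_apply (y x : Fin n → ZMod 2) :
    chi y x = if (∑ i, x i * y i) = 0 then 1 else mOne := rfl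

lemma chi_coe (y x : Fin n → ZMod 2) : ((chi y x : Circle) : ℂ) = ((ee x y : ℝ) : ℂ) := by
  rw [chi_apply]
  unfold ee sg
  split
  · simp
  · simp [mOne]

lemma ftrans_chi (f : (Fin n → ZMod 2) → ℝ) (y : Fin n → ZMod 2) :
    ftrans f (chi y) = ((∑ x, ee x y * f x : ℝ) : ℂ) := by
  unfold ftrans
  rw [Complex.ofReal_sum]
  exact Finset.sum_congr rfl fun x _ => by rw [chi_coe]; push_cast; ring

lemma posft_real {f : (Fin n → ZMod 2) → ℝ} (hf : PosFT f) (y : Fin n → ZMod 2) :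
    0 ≤ ∑ x, ee x y * f x := by
  have := hf (chi y)
  rw [ftrans_chi] at this
  exact Complex.zero_le_real.mp this

lemma posft_sum {f : (Fin n → ZMod 2) → ℝ} (hf : PosFT f) : 0 ≤ ∑ x, f x := by
  have := posft_real hf 0
  have h1 : ∀ x : Fin n → ZMod 2, ee x 0 = 1 := fun x => by rw [ee_comm]; exact ee_zero_left x
  rw [Finset.sum_congr rfl fun x _ => by rw [h1 x, one_mul]] at this
  exact this

lemma posft_apply_zero {f : (Fin n → ZMod 2) → ℝ} (hf : PosFT f) : 0 ≤ f 0 := by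
  have h1 : 0 ≤ ∑ y, ∑ x : Fin n → ZMod 2, ee x y * f x :=
    Finset.sum_nonneg fun y _ => posft_real hf y
  have h2 : ∑ y, ∑ x : Fin n → ZMod 2, ee x y * f x
      = (Fintype.card (Fin n → ZMod 2) : ℝ) * f 0 := by
    rw [Finset.sum_comm]
    rw [Finset.sum_congr rfl fun x _ => by rw [← Finset.sum_mul]]
    rw [Finset.sum_eq_single 0]
    · rw [Finset.sum_congr rfl fun y _ => ee_zero_left y]
      simp [mul_comm]
    · intro x _ hx
      rw [sum_ee_zero x hx, zero_mul]
    · simp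
  rw [h2] at h1
  have hq : (0:ℝ) < (Fintype.card (Fin n → ZMod 2) : ℝ) := by
    exact_mod_cast Fintype.card_pos
  nlinarith
lemma char_ee_nonneg (γ : AddChar (Fin n → ZMod 2) Circle) (y : Fin n → ZMod 2) :
    0 ≤ ∑ x, (γ x : ℂ) * ((ee x y : ℝ) : ℂ) := by
  set ψ : (Fin n → ZMod 2) → ℂ := fun x => (γ x : ℂ) * ((ee x y : ℝ) : ℂ) with hψ
  have hmul : ∀ a b, ψ (a + b) = ψ a * ψ b := by
    intro a b
    simp only [hψ]
    rw [AddChar.map_add_eq_mul, ee_add_left]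
    push_cast
    ring
  by_cases hall : ∀ x, ψ x = 1
  · have : ∑ x, ψ x = ((Fintype.card (Fin n → ZMod 2) : ℝ) : ℂ) := by
      rw [Finset.sum_congr rfl fun x _ => hall x]
      simp
    rw [this]
    rw [Complex.zero_le_real]
    positivity
  · push_neg at hall
    obtain ⟨x₀, hx₀⟩ := hall
    have hs : ∑ x, ψ (x₀ + x) = ∑ x, ψ x :=
      Fintype.sum_equiv (Equiv.addLeft x₀) _ _ (fun x => rfl)
    have hshift : ∑ x, ψ x = ψ x₀ * ∑ x, ψ x := by
      rw [Finset.mul_sum, ← hs]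
      exact Finset.sum_congr rfl fun x _ => hmul x₀ x
    have hzero : ∑ x, ψ x = 0 := by
      have h2 : (ψ x₀ - 1) * ∑ x, ψ x = 0 := by
        rw [sub_mul, one_mul, ← hshift, sub_self]
      rcases mul_eq_zero.mp h2 with h | h
      · exact absurd (sub_eq_zero.mp h) hx₀
      · exact h
    rw [hzero]

end Stmt4Aux

open Polynomial Polynomial.Chebyshev

lemma cheb_bound (k : ℕ) (x : ℝ) (h1 : -1 ≤ x) (h2 : x ≤ 1) :
    |(T ℝ (k : ℤ)).eval x| ≤ 1 := by
  have hc : Real.cos (Real.arccos x) = x := Real.cos_arccos h1 h2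
  rw [← hc, T_real_cos]
  exact Real.abs_cos_le_one _

lemma cheb_growth (k : ℕ) (δ : ℝ) (hδ : 0 ≤ δ) :
    1 + (k : ℝ) ^ 2 * δ ≤ (T ℝ (k : ℤ)).eval (1 + δ) := by
  suffices H : ∀ j : ℕ, (1 + (j : ℝ) ^ 2 * δ ≤ (T ℝ (j : ℤ)).eval (1 + δ)) ∧
      (1 + ((j : ℝ) + 1) ^ 2 * δ ≤ (T ℝ ((j : ℤ) + 1)).eval (1 + δ)) ∧
      ((2 * (j : ℝ) + 1) * δ ≤ (T ℝ ((j : ℤ) + 1)).eval (1 + δ) - (T ℝ (j : ℤ)).eval (1 + δ)) by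
    exact (H k).1
  intro j
  induction j with
  | zero =>
    norm_num [T_zero, T_one]
  | succ j ih =>
    obtain ⟨h1, h2, h3⟩ := ih
    have hrec : (T ℝ ((j : ℤ) + 2)).eval (1 + δ) =
        2 * (1 + δ) * (T ℝ ((j : ℤ) + 1)).eval (1 + δ) - (T ℝ (j : ℤ)).eval (1 + δ) := by
      rw [T_add_two]
      simp [eval_sub, eval_mul]
    have hcast1 : ((j + 1 : ℕ) : ℤ) = (j : ℤ) + 1 := by push_cast; ring
    have hcast2 : ((j : ℤ) + 1) + 1 = (j : ℤ) + 2 := by ring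
    have hb1 : 1 ≤ (T ℝ ((j : ℤ) + 1)).eval (1 + δ) := by
      nlinarith [h2, hδ, sq_nonneg ((j : ℝ) + 1), mul_nonneg (mul_nonneg hδ hδ) hδ,
        mul_nonneg (sq_nonneg ((j : ℝ) + 1)) hδ]
    have hmul : δ * 1 ≤ δ * (T ℝ ((j : ℤ) + 1)).eval (1 + δ) :=
      mul_le_mul_of_nonneg_left hb1 hδ
    have key3 : (2 * ((j : ℝ) + 1) + 1) * δ ≤
        (T ℝ ((j : ℤ) + 2)).eval (1 + δ) - (T ℝ ((j : ℤ) + 1)).eval (1 + δ) := by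
      rw [hrec]
      nlinarith [h3, hmul]
    refine ⟨?_, ?_, ?_⟩
    · rw [hcast1]
      push_cast
      exact h2
    · rw [hcast1, hcast2]
      push_cast
      nlinarith [key3, h2]
    · rw [hcast1, hcast2]
      push_cast
      nlinarith [key3]

lemma cheb_natDegree (k : ℕ) : (T ℝ (k : ℤ)).natDegree ≤ k := by
  suffices H : ∀ j : ℕ, (T ℝ (j : ℤ)).natDegree ≤ j ∧ (T ℝ ((j : ℤ) + 1)).natDegree ≤ j + 1 by
    exact (H k).1
  intro j
  induction j with
  | zero => simp [T_zero, T_one]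
  | succ j ih =>
    obtain ⟨h1, h2⟩ := ih
    have hcast1 : ((j + 1 : ℕ) : ℤ) = (j : ℤ) + 1 := by push_cast; ring
    constructor
    · rw [hcast1]; exact h2
    · rw [hcast1, show ((j : ℤ) + 1) + 1 = (j : ℤ) + 2 by ring, T_add_two]
      refine (natDegree_sub_le _ _).trans ?_
      have : (2 * X * T ℝ ((j : ℤ) + 1)).natDegree ≤ j + 2 := by
        refine (natDegree_mul_le).trans ?_
        have h2X : (2 * X : ℝ[X]).natDegree ≤ 1 := by
          refine (natDegree_mul_le).trans ?_
          simp
        omega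
      have h1' : (T ℝ (j : ℤ)).natDegree ≤ j + 2 := by omega
      omega


open Polynomial in
lemma cheb_package (n k : ℕ) (hn2 : (2:ℝ) ≤ (n:ℝ)) :
    ∃ Q : Polynomial ℝ, Q.natDegree < k + 1 ∧
      (∀ t : ℝ, -(n:ℝ) ≤ t → t ≤ (n:ℝ) - 2 → |Q.eval t| ≤ 1) ∧
      1 + (k:ℝ)^2 * (2/((n:ℝ)-1)) ≤ Q.eval (n:ℝ) := by
  have hn1 : (0:ℝ) < (n:ℝ) - 1 := by linarith
  have hn1' : ((n:ℝ) - 1) ≠ 0 := ne_of_gt hn1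
  refine ⟨(Polynomial.Chebyshev.T ℝ (k:ℤ)).comp
    (Polynomial.C (1/((n:ℝ)-1)) * (X + Polynomial.C 1)), ?_, ?_, ?_⟩
  · have h1 := natDegree_comp_le (p := Polynomial.Chebyshev.T ℝ (k:ℤ))
      (q := Polynomial.C (1/((n:ℝ)-1)) * (X + Polynomial.C 1))
    have h2 : (Polynomial.C (1/((n:ℝ)-1)) * (X + Polynomial.C 1)).natDegree ≤ 1 := by
      refine le_trans (natDegree_C_mul_le _ _) ?_
      exact le_of_eq (natDegree_X_add_C 1)
    have h3 := cheb_natDegree k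
    have h4 := Nat.mul_le_mul h3 h2
    omega
  · intro t h1 h2
    rw [eval_comp]
    have harg : (Polynomial.C (1/((n:ℝ)-1)) * (X + Polynomial.C 1)).eval t
        = (t+1)/((n:ℝ)-1) := by
      rw [eval_mul, eval_C, eval_add, eval_X, eval_C]
      field_simp
    rw [harg]
    apply cheb_bound
    · rw [le_div_iff₀ hn1]
      linarith
    · rw [div_le_one hn1]
      linarith
  · rw [eval_comp]
    have harg : (Polynomial.C (1/((n:ℝ)-1)) * (X + Polynomial.C 1)).eval (n:ℝ)
        = 1 + 2/((n:ℝ)-1) := by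
      rw [eval_mul, eval_C, eval_add, eval_X, eval_C]
      field_simp
      ring
    rw [harg]
    exact cheb_growth k _ (by positivity)


namespace Stmt4Aux
open Polynomial Polynomial.Chebyshev

set_option maxHeartbeats 2000000 in
theorem main (ε : ℝ) (hε : 0 < ε) (hε2 : ε ≤ 1/2) :
    ∃ N : ℕ, ∀ n : ℕ, N ≤ n →
      ∃ A : Set (Fin n → ZMod 2), IsStandard A ∧
        lam A < ε ∧ 1 / 2 - ε < lamPM A := by
  refine ⟨⌈(16:ℝ)/ε^3⌉₊ + 2, fun n hn => ?_⟩
  have hnR : (16:ℝ)/ε^3 ≤ (n:ℝ) := by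
    calc (16:ℝ)/ε^3 ≤ (⌈(16:ℝ)/ε^3⌉₊ : ℝ) := Nat.le_ceil _
    _ ≤ (n:ℝ) := by exact_mod_cast le_trans (Nat.le_add_right _ 2) hn
  have hn2 : 2 ≤ n := le_trans (Nat.le_add_left 2 _) hn
  have hn2R : (2:ℝ) ≤ (n:ℝ) := by exact_mod_cast hn2
  have hε3 : 0 < ε^3 := by positivity
  have hnbig : (64:ℝ) ≤ ε * n := by
    have h1 : ε * ((16:ℝ)/ε^3) ≤ ε * n := by
      apply mul_le_mul_of_nonneg_left hnR hε.le
    have h2 : ε * ((16:ℝ)/ε^3) = 16/ε^2 := by field_simp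
    have h3 : (64:ℝ) ≤ 16/ε^2 := by
      rw [le_div_iff₀ (by positivity)]
      nlinarith
    linarith [h2 ▸ h1]
  set k : ℕ := ⌊ε * n / 2⌋₊ with hk
  have hk1 : (k:ℝ) ≤ ε * n / 2 := Nat.floor_le (by positivity)
  have hk2 : ε * n / 2 < (k:ℝ) + 1 := Nat.lt_floor_add_one _
  have hklb : ε * n / 4 ≤ (k:ℝ) := by nlinarith
  have hknR : (k:ℝ) < (n:ℝ) := by nlinarith
  have hkn : k < n := by exact_mod_cast hknR
  have hδpos : 0 < 2 / ((n:ℝ) - 1) := by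
    apply div_pos (by norm_num)
    linarith
  have hδn : 2/(n:ℝ) ≤ 2 / ((n:ℝ) - 1) := by
    apply div_le_div_of_nonneg_left (by norm_num) (by linarith) (by linarith)
  obtain ⟨Q, hQdeg, hQbound, hQgrow⟩ := cheb_package n k hn2R
  have hM2 : 2/ε ≤ (k:ℝ)^2 * (2 / ((n:ℝ) - 1)) := by
    have h1 : (ε * n / 4)^2 * (2/(n:ℝ)) ≤ (k:ℝ)^2 * (2 / ((n:ℝ) - 1)) := by
      apply mul_le_mul
      · nlinarith
      · exact hδn
      · positivity
      · positivity
    have h2 : (ε * n / 4)^2 * (2/(n:ℝ)) = ε^2 * n / 8 := by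
      field_simp
      ring
    have h3 : 2/ε ≤ ε^2 * n / 8 := by
      have h4 : (16:ℝ) ≤ (n:ℝ) * ε^3 := by
        rw [div_le_iff₀ hε3] at hnR
        linarith
      rw [div_le_iff₀ hε]
      nlinarith
    linarith [h2 ▸ h1]
  obtain ⟨M, hMdef⟩ : ∃ M : ℝ, M = Q.eval (n:ℝ) := ⟨_, rfl⟩
  have hQgrow' : 1 + (k:ℝ)^2 * (2/((n:ℝ)-1)) ≤ M := by
    rw [hMdef]
    exact hQgrow
  have hMbig : 1 + 2/ε ≤ M := by linarith
  have hMpos : 0 < M := by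
    have : (0:ℝ) < 2/ε := by positivity
    linarith
  set A : Set (Fin n → ZMod 2) := {x | x = 0 ∨ n - k ≤ wt x} with hA
  have h0A : (0 : Fin n → ZMod 2) ∈ A := Or.inl rfl
  have hnotA : ∀ x : Fin n → ZMod 2, x ∉ A → x ≠ 0 ∧ wt x < n - k := by
    intro x hx
    rw [hA, Set.mem_setOf_eq] at hx
    push_neg at hx
    exact ⟨hx.1, by omega⟩
  refine ⟨A, ⟨?_, h0A⟩, ?_, ?_⟩
  · -- standard
    ext x
    rw [Set.mem_neg]
    have hxx : -x = x := by
      rw [neg_eq_iff_add_eq_zero]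
      exact add_self_zero x
    rw [hxx]
  · -- lam A < ε
    set F : (Fin n → ZMod 2) → ℝ := fun y => 1 + ee uu y * Q.eval (ss y) with hF
    set f : (Fin n → ZMod 2) → ℝ := fun x => ∑ y, F y * ee x y with hf
    obtain ⟨q, hqcard, hqpos⟩ : ∃ q : ℝ, q = (Fintype.card (Fin n → ZMod 2) : ℝ) ∧ 0 < q :=
      ⟨_, rfl, by exact_mod_cast Fintype.card_pos⟩
    have hg : ∀ z : Fin n → ZMod 2, k < wt z → ∑ y, Q.eval (ss y) * ee z y = 0 := by
      intro z hz
      have hexp : ∀ y : Fin n → ZMod 2, Q.eval (ss y)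
          = ∑ j ∈ Finset.range (k+1), Q.coeff j * (ss y)^j := by
        intro y
        exact eval_eq_sum_range' hQdeg _
      calc ∑ y, Q.eval (ss y) * ee z y
          = ∑ y, ∑ j ∈ Finset.range (k+1), Q.coeff j * ((ss y)^j * ee z y) := by
            refine Finset.sum_congr rfl fun y _ => ?_
            rw [hexp y, Finset.sum_mul]
            exact Finset.sum_congr rfl fun j _ => by ring
        _ = ∑ j ∈ Finset.range (k+1), Q.coeff j * ∑ y, (ss y)^j * ee z y := by
            rw [Finset.sum_comm]
            exact Finset.sum_congr rfl fun j _ => by rw [Finset.mul_sum]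
        _ = 0 := by
            refine Finset.sum_eq_zero fun j hj => ?_
            rw [Finset.mem_range] at hj
            rw [key_support j z (by omega), mul_zero]
    have hF0 : F 0 = 1 + M := by
      show 1 + ee uu 0 * Q.eval (ss 0) = 1 + M
      rw [ee_comm, ee_zero_left, ss_zero, one_mul, hMdef]
    have hFnn : ∀ y, 0 ≤ F y := by
      intro y
      by_cases hy : y = 0
      · rw [hy, hF0]; linarith
      · have hw1 : 1 ≤ wt y := wt_pos y hy
        have hwn : wt y ≤ n := wt_le y
        have hwR : (1:ℝ) ≤ (wt y:ℝ) := by exact_mod_cast hw1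
        have hwR2 : (wt y:ℝ) ≤ (n:ℝ) := by exact_mod_cast hwn
        have hss : ss y = (n:ℝ) - 2 * (wt y : ℝ) := ss_eq y
        have hnpos : (0:ℝ) < (n:ℝ) - 1 := by linarith
        have hb : |Q.eval (ss y)| ≤ 1 := by
          apply hQbound
          · rw [hss]
            linarith
          · rw [hss]
            linarith
        have he := ee_abs_le uu y
        have h5 : |ee uu y * Q.eval (ss y)| ≤ 1 := by
          rw [abs_mul]
          calc |ee uu y| * |Q.eval (ss y)| ≤ 1 * 1 :=
            mul_le_mul he hb (abs_nonneg _) (by norm_num)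
          _ = 1 := by ring
        have h6 := (abs_le.mp h5).1
        show 0 ≤ 1 + ee uu y * Q.eval (ss y)
        linarith
    have hsum_ee_col : ∀ y : Fin n → ZMod 2, ∑ x, ee x y = if y = 0 then q else 0 := by
      intro y
      by_cases hy : y = 0
      · rw [if_pos hy, hy]
        rw [Finset.sum_congr rfl fun x _ => ee_zero_right x]
        rw [Finset.sum_const, Finset.card_univ, nsmul_eq_mul, mul_one, hqcard]
      · rw [if_neg hy]
        exact sum_ee_zero' y hy
    have hsumf : ∑ x, f x = (1 + M) * q := by
      rw [hf]
      rw [Finset.sum_comm]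
      calc ∑ y, ∑ x, F y * ee x y
          = ∑ y, F y * ∑ x, ee x y := by
            exact Finset.sum_congr rfl fun y _ => (Finset.mul_sum _ _ _).symm
        _ = ∑ y, (if y = 0 then F y * q else 0) := by
            refine Finset.sum_congr rfl fun y _ => ?_
            rw [hsum_ee_col y, mul_ite, mul_zero]
        _ = F 0 * q := by
            rw [Finset.sum_ite_eq' Finset.univ (0 : Fin n → ZMod 2) (fun y => F y * q)]
            simp
        _ = (1 + M) * q := by rw [hF0]
    have hf0 : f 0 = q := by
      show (∑ y, F y * ee 0 y) = q
      have h1 : ∀ y : Fin n → ZMod 2, F y * ee 0 y = 1 + Q.eval (ss y) * ee uu y := by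
        intro y
        rw [ee_zero_left, mul_one]
        show 1 + ee uu y * Q.eval (ss y) = _
        ring
      rw [Finset.sum_congr rfl fun y _ => h1 y, Finset.sum_add_distrib]
      rw [hg uu (by rw [wt_uu]; omega)]
      rw [Finset.sum_const, Finset.card_univ, nsmul_eq_mul, mul_one, hqcard]
      ring
    have hsupp : ∀ x, x ∉ A → f x = 0 := by
      intro x hx
      obtain ⟨hx0, hxw⟩ := hnotA x hx
      have hwn := wt_le x
      show (∑ y, F y * ee x y) = 0
      have h1 : ∀ y, F y * ee x y = ee x y + Q.eval (ss y) * ee (uu + x) y := by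
        intro y
        rw [ee_add_left]
        show (1 + ee uu y * Q.eval (ss y)) * ee x y = _
        ring
      rw [Finset.sum_congr rfl fun y _ => h1 y, Finset.sum_add_distrib, sum_ee_zero x hx0,
        hg (uu + x) (by rw [wt_uu_add]; omega)]
      ring
    have hPos : PosFT f := by
      intro γ
      have h1 : ∀ x : Fin n → ZMod 2, ((f x : ℝ) : ℂ) = ∑ y, (F y : ℂ) * ((ee x y : ℝ):ℂ) := by
        intro x
        show (((∑ y, F y * ee x y : ℝ)) : ℂ) = _
        push_cast
        rfl
      have key : ftrans f γ = ∑ y, (F y : ℂ) * ∑ x, (γ x : ℂ) * ((ee x y:ℝ):ℂ) := by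
        show (∑ x, (γ x : ℂ) * ((f x : ℝ):ℂ)) = _
        calc ∑ x, (γ x : ℂ) * ((f x : ℝ):ℂ)
            = ∑ x, ∑ y, (F y : ℂ) * ((γ x : ℂ) * ((ee x y:ℝ):ℂ)) := by
              refine Finset.sum_congr rfl fun x _ => ?_
              rw [h1 x, Finset.mul_sum]
              exact Finset.sum_congr rfl fun y _ => by ring
          _ = ∑ y, ∑ x, (F y : ℂ) * ((γ x : ℂ) * ((ee x y:ℝ):ℂ)) := Finset.sum_comm
          _ = _ := by
              exact Finset.sum_congr rfl fun y _ => (Finset.mul_sum _ _ _).symm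
      rw [key]
      exact Finset.sum_nonneg fun y _ =>
        mul_nonneg (Complex.zero_le_real.mpr (hFnn y)) (char_ee_nonneg γ y)
    have hsumpos : 0 < ∑ x, f x := by
      rw [hsumf]
      exact mul_pos (by linarith) hqpos
    have hfne : f ≠ 0 := by
      intro h
      have h2 := congrFun h 0
      rw [hf0] at h2
      simp only [Pi.zero_apply] at h2
      exact absurd h2 (ne_of_gt hqpos)
    have hmem : q / ((1+M)*q) ∈ lamSet {f : (Fin n → ZMod 2) → ℝ | f ≠ 0 ∧ ∀ x ∉ A, f x = 0} :=
      ⟨f, ⟨hfne, hsupp⟩, hPos, ne_of_gt hsumpos, by rw [hf0, hsumf]⟩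
    have hbdd : BddBelow (lamSet {f : (Fin n → ZMod 2) → ℝ | f ≠ 0 ∧ ∀ x ∉ A, f x = 0}) := by
      refine ⟨0, fun r hr => ?_⟩
      obtain ⟨g, hgS, hgpos, hgsum, rfl⟩ := hr
      exact div_nonneg (posft_apply_zero hgpos) (posft_sum hgpos)
    have hle : lam A ≤ q / ((1+M)*q) := csInf_le hbdd hmem
    have hratio : q / ((1+M)*q) = 1/(1+M) := by
      have hq0 : ((1+M)*q) ≠ 0 := ne_of_gt (mul_pos (by linarith) hqpos)
      have h10 : ((1:ℝ)+M) ≠ 0 := by linarith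
      rw [div_eq_div_iff hq0 h10]
      ring
    have hfin : 1/(1+M) < ε := by
      rw [div_lt_iff₀ (by linarith)]
      have h7 : 2/ε * ε = 2 := by field_simp
      nlinarith [hMbig]
    rw [hratio] at hle
    linarith
  · -- lamPM
    obtain ⟨c, hc⟩ : ∃ c : ℝ, c = 1/2 - ε/2 := ⟨_, rfl⟩
    set SS : Set ((Fin n → ZMod 2) → ℝ) :=
      {f | f ≠ 0 ∧ (∀ x ∉ A, f x ≤ 0) ∧ ∀ x ∈ A, 0 ≤ f x} with hSS
    have hsum1 : ∑ x : Fin n → ZMod 2, (if x = (0 : Fin n → ZMod 2) then (1:ℝ) else 0) = 1 := by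
      rw [Finset.sum_eq_single (0 : Fin n → ZMod 2)]
      · simp
      · intro b _ hb
        simp [hb]
      · simp
    have hnonempty : (lamSet SS).Nonempty := by
      refine ⟨1, (fun x => if x = 0 then 1 else 0), ⟨?_, ?_, ?_⟩, ?_, ?_, ?_⟩
      · intro h
        have := congrFun h 0
        simp at this
      · intro x hx
        show (if x = 0 then (1:ℝ) else 0) ≤ 0
        rw [if_neg (hnotA x hx).1]
      · intro x _
        show (0:ℝ) ≤ (if x = 0 then (1:ℝ) else 0)
        split <;> norm_num
      · intro γ
        show (0:ℂ) ≤ ∑ x, (γ x : ℂ) * (((if x = 0 then (1:ℝ) else 0) : ℝ):ℂ)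
        have h1 : ∑ x, (γ x : ℂ) * (((if x = 0 then (1:ℝ) else 0) : ℝ):ℂ) = 1 := by
          rw [Finset.sum_eq_single (0 : Fin n → ZMod 2)]
          · simp
          · intro b _ hb
            simp [hb]
          · simp
        rw [h1]
        exact zero_le_one
      · show (∑ x : Fin n → ZMod 2, (if x = (0:Fin n → ZMod 2) then (1:ℝ) else 0)) ≠ 0
        rw [hsum1]
        norm_num
      · show (1:ℝ) = (if (0:Fin n → ZMod 2) = 0 then (1:ℝ) else 0) /
          ∑ x : Fin n → ZMod 2, (if x = (0:Fin n → ZMod 2) then (1:ℝ) else 0)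
        rw [hsum1, if_pos rfl]
        norm_num
    have hlow : ∀ r ∈ lamSet SS, c ≤ r := by
      intro r hr
      obtain ⟨g, ⟨hgne, hgneg, hgpos⟩, hgft, hgsum, rfl⟩ := hr
      have hsumpos : 0 < ∑ x, g x := lt_of_le_of_ne (posft_sum hgft) (Ne.symm hgsum)
      have hT : 0 ≤ ∑ x, ss x * g x := by
        have h1 : ∀ x : Fin n → ZMod 2, ss x * g x = ∑ i, ee x (dl i) * g x := by
          intro x
          rw [ss_eq_sum_ee, Finset.sum_mul]
          exact Finset.sum_congr rfl fun i _ => by rw [ee_comm]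
        rw [Finset.sum_congr rfl fun x _ => h1 x, Finset.sum_comm]
        exact Finset.sum_nonneg fun i _ => posft_real hgft (dl i)
      have h2n : (0:ℝ) < 2*(n:ℝ) := by positivity
      have hcoeff : ∀ x : Fin n → ZMod 2,
          0 ≤ ((if x = 0 then (1:ℝ) else 0) - c - ss x/(2*(n:ℝ))) * g x := by
        intro x
        by_cases hx0 : x = 0
        · subst hx0
          rw [if_pos rfl, ss_zero]
          have hhalf : (n:ℝ)/(2*(n:ℝ)) = 1/2 := by
            field_simp
          rw [hhalf]
          have hg0 : 0 ≤ g 0 := hgpos 0 h0A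
          apply mul_nonneg _ hg0
          rw [hc]
          linarith
        · rw [if_neg hx0]
          have hw1 : 1 ≤ wt x := wt_pos x hx0
          have hwR1 : (1:ℝ) ≤ (wt x:ℝ) := by exact_mod_cast hw1
          by_cases hxA : x ∈ A
          · have hw : n - k ≤ wt x := by
              rcases hxA with h | h
              · exact absurd h hx0
              · exact h
            have hwR : (n:ℝ) - (k:ℝ) ≤ (wt x:ℝ) := by
              have : n ≤ wt x + k := by omega
              have h2 : (n:ℝ) ≤ (wt x:ℝ) + (k:ℝ) := by exact_mod_cast this
              linarith
            apply mul_nonneg _ (hgpos x hxA)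
            rw [ss_eq]
            have key : ((n:ℝ) - 2*(wt x:ℝ))/(2*(n:ℝ)) ≤ -c := by
              rw [div_le_iff₀ h2n, hc]
              nlinarith
            linarith
          · obtain ⟨_, hxw⟩ := hnotA x hxA
            have hnat : wt x + k + 1 ≤ n := by omega
            have hwlt : (wt x:ℝ) + (k:ℝ) + 1 ≤ (n:ℝ) := by exact_mod_cast hnat
            have hcle : (0:ℝ) - c - ss x/(2*(n:ℝ)) ≤ 0 := by
              rw [ss_eq]
              have key : -c ≤ ((n:ℝ) - 2*(wt x:ℝ))/(2*(n:ℝ)) := by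
                rw [le_div_iff₀ h2n, hc]
                nlinarith
              linarith
            have hgle : g x ≤ 0 := hgneg x hxA
            nlinarith [hcle, hgle]
      have hS : 0 ≤ ∑ x, ((if x = 0 then (1:ℝ) else 0) - c - ss x/(2*(n:ℝ))) * g x :=
        Finset.sum_nonneg fun x _ => hcoeff x
      have hexpand : ∑ x, ((if x = 0 then (1:ℝ) else 0) - c - ss x/(2*(n:ℝ))) * g x
          = g 0 - c * ∑ x, g x - (∑ x, ss x * g x)/(2*(n:ℝ)) := by
        have h1 : ∀ x : Fin n → ZMod 2, ((if x = 0 then (1:ℝ) else 0) - c - ss x/(2*(n:ℝ))) * g x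
            = (if x = 0 then g x else 0) - c * g x - (ss x * g x)/(2*(n:ℝ)) := by
          intro x
          split <;> ring
        rw [Finset.sum_congr rfl fun x _ => h1 x]
        rw [Finset.sum_sub_distrib, Finset.sum_sub_distrib]
        congr 1
        congr 1
        · rw [Finset.sum_ite_eq' Finset.univ (0 : Fin n → ZMod 2) g]
          simp
        · rw [Finset.mul_sum]
        · rw [Finset.sum_div]
      rw [hexpand] at hS
      have hT2 : 0 ≤ (∑ x, ss x * g x)/(2*(n:ℝ)) := div_nonneg hT h2n.le
      rw [le_div_iff₀ hsumpos]
      linarith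
    have hfin : c ≤ lamPM A := le_csInf hnonempty hlow
    rw [hc] at hfin
    linarith

theorem stmt4' (ε : ℝ) (hε : 0 < ε) :
    ∃ N : ℕ, ∀ n : ℕ, N ≤ n →
      ∃ A : Set (Fin n → ZMod 2), IsStandard A ∧
        lam A < ε ∧ 1 / 2 - ε < lamPM A := by
  have hε0 : 0 < min ε (1/2) := lt_min hε (by norm_num)
  obtain ⟨N, hN⟩ := main (min ε (1/2)) hε0 (min_le_right _ _)
  refine ⟨N, fun n hn => ?_⟩
  obtain ⟨A, hstd, hlam, hpm⟩ := hN n hn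
  refine ⟨A, hstd, lt_of_lt_of_le hlam (min_le_left _ _), ?_⟩
  have : 1/2 - ε ≤ 1/2 - min ε (1/2) := by
    have := min_le_left ε (1/2)
    linarith
  linarith

end Stmt4Aux

theorem stmt4 (ε : ℝ) (hε : 0 < ε) :
    ∃ N : ℕ, ∀ n : ℕ, N ≤ n →
      ∃ A : Set (Fin n → ZMod 2), IsStandard A ∧
        lam A < ε ∧ 1 / 2 - ε < lamPM A := by
  exact Stmt4Aux.stmt4' ε hε
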